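/- Let G and H be finite groups acting on the right and left respectively on a set X (compatibly, making X an (H,G)-biset), and fix α ∈ X. Let G₀ = Stab_G(α) = {g ∈ G : α·g = α}, H₀ = Stab_H(α) = {h ∈ H : h·α = α}, G₁ = {g ∈ G : ∃ h ∈ H, α·g = h·α}, and H₁ = {h ∈ H : ∃ g ∈ G, h·α = α·g}. Then G₀ and G₁ are subgroups of G, H₀ and H₁ are subgroups of H, G₀ is normal in G₁, H₀ is normal in H₁, and G₁/G₀ ≅ H₁/H₀ as groups. -/

import Mathlib

open MulOpposite

section Aux
variable {G H X : Type*} [Group G] [Group H]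
    [MulAction H X] [MulAction Gᵐᵒᵖ X]

def myG0 (α : X) : Subgroup G where
  carrier := {g : G | op g • α = α}
  one_mem' := by simp
  mul_mem' := by
    intro a b ha hb
    simp only [Set.mem_setOf_eq] at *
    have e : op (a * b) = op b * op a := rfl
    rw [e, mul_smul, ha, hb]
  inv_mem' := by
    intro a ha
    simp only [Set.mem_setOf_eq] at *
    have h1 : op a⁻¹ • (op a • α) = op a⁻¹ • α := by rw [ha]
    rw [← mul_smul, show op a⁻¹ * op a = 1 by rw [← op_mul]; simp, one_smul] at h1
    exact h1.symm

def myH0 (α : X) : Subgroup H where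
  carrier := {h : H | h • α = α}
  one_mem' := by simp
  mul_mem' := by
    intro a b ha hb
    simp only [Set.mem_setOf_eq] at *
    rw [mul_smul, hb, ha]
  inv_mem' := by
    intro a ha
    simp only [Set.mem_setOf_eq] at *
    rw [← ha, inv_smul_smul, ha]

variable (hcomm : ∀ (h : H) (g : Gᵐᵒᵖ) (x : X), g • (h • x) = h • (g • x)) (α : X)

def myG1 : Subgroup G where
  carrier := {g : G | ∃ h : H, op g • α = h • α}
  one_mem' := ⟨1, by simp⟩
  mul_mem' := by
    rintro a b ⟨ha, hha⟩ ⟨hb, hhb⟩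
    refine ⟨ha * hb, ?_⟩
    have e : op (a * b) = op b * op a := rfl
    rw [e, mul_smul, hha, hcomm, hhb, mul_smul]
  inv_mem' := by
    rintro a ⟨h, hh⟩
    refine ⟨h⁻¹, ?_⟩
    have h1 : op a⁻¹ • (op a • α) = op a⁻¹ • (h • α) := by rw [hh]
    rw [← mul_smul, show op a⁻¹ * op a = 1 by rw [← op_mul]; simp, one_smul,
      hcomm] at h1
    exact (inv_smul_eq_iff.mpr h1).symm

def myH1 : Subgroup H where
  carrier := {h : H | ∃ g : G, h • α = op g • α}
  one_mem' := ⟨1, by simp⟩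
  mul_mem' := by
    rintro a b ⟨ga, hga⟩ ⟨gb, hgb⟩
    refine ⟨ga * gb, ?_⟩
    rw [mul_smul, hgb, ← hcomm, hga, ← mul_smul]
    rfl
  inv_mem' := by
    rintro a ⟨g, hg⟩
    refine ⟨g⁻¹, ?_⟩
    have h1 : op g⁻¹ • (a • α) = op g⁻¹ • (op g • α) := by rw [hg]
    rw [← mul_smul, show op g⁻¹ * op g = 1 by rw [← op_mul]; simp, one_smul,
      hcomm] at h1
    exact inv_smul_eq_iff.mpr h1.symm

lemma myG0_le_myG1 : (myG0 α : Subgroup G) ≤ myG1 hcomm α := by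
  intro g hg
  exact ⟨1, by rw [one_smul]; exact hg⟩

lemma myH0_le_myH1 : (myH0 α : Subgroup H) ≤ myH1 hcomm α := by
  intro h hh
  exact ⟨1, by rw [op_one, one_smul]; exact hh⟩

lemma myG0_normal : ((myG0 α : Subgroup G).subgroupOf (myG1 hcomm α)).Normal := by
  constructor
  rintro ⟨n, hn⟩ hn0 ⟨g, h, hg⟩
  rw [Subgroup.mem_subgroupOf] at hn0 ⊢
  have hn0' : op n • α = α := hn0
  show op (g * n * g⁻¹) • α = α
  have e : op (g * n * g⁻¹) = op g⁻¹ * op n * op g := by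
    rw [← op_mul, ← op_mul, mul_assoc]
  rw [e, mul_smul, mul_smul, hg, hcomm, hn0', ← hg, ← mul_smul,
    show op g⁻¹ * op g = 1 by rw [← op_mul]; simp, one_smul]

lemma myH0_normal : ((myH0 α : Subgroup H).subgroupOf (myH1 hcomm α)).Normal := by
  constructor
  rintro ⟨n, hn⟩ hn0 h
  rw [Subgroup.mem_subgroupOf] at hn0 ⊢
  have hn0' : n • α = α := hn0
  obtain ⟨g', hg'⟩ := (myH1 hcomm α).inv_mem h.2
  show ((h : H) * n * (h : H)⁻¹) • α = α
  rw [mul_smul, mul_smul]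
  have key : n • ((h : H)⁻¹ • α) = (h : H)⁻¹ • α := by
    rw [show ((h : H)⁻¹ : H) • α = op g' • α from hg', ← hcomm, hn0']
  rw [key, smul_inv_smul]

noncomputable def pick (g : (myG1 hcomm α : Subgroup G)) : H := g.2.choose

lemma pick_spec (g : (myG1 hcomm α : Subgroup G)) : op (g : G) • α = pick hcomm α g • α :=
  g.2.choose_spec

lemma pick_mem (g : (myG1 hcomm α : Subgroup G)) : pick hcomm α g ∈ myH1 hcomm α :=
  ⟨g, (pick_spec hcomm α g).symm⟩

lemma coset_eq {h h' : (myH1 hcomm α : Subgroup H)} (e : (h : H) • α = (h' : H) • α) :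
    (h : (myH1 hcomm α) ⧸ (myH0 α).subgroupOf (myH1 hcomm α)) = h' := by
  rw [QuotientGroup.eq, Subgroup.mem_subgroupOf]
  show ((h : H)⁻¹ * h') • α = α
  rw [mul_smul, ← e, inv_smul_smul]

variable [inst : ((myH0 α : Subgroup H).subgroupOf (myH1 hcomm α)).Normal]
    [instG : ((myG0 α : Subgroup G).subgroupOf (myG1 hcomm α)).Normal]

noncomputable def myhom : (myG1 hcomm α : Subgroup G) →*
    (myH1 hcomm α) ⧸ (myH0 α).subgroupOf (myH1 hcomm α) where
  toFun g := QuotientGroup.mk ⟨pick hcomm α g, pick_mem hcomm α g⟩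
  map_one' := by
    have e1 : (QuotientGroup.mk (⟨pick hcomm α 1, pick_mem hcomm α 1⟩ :
        (myH1 hcomm α : Subgroup H)) :
        (myH1 hcomm α) ⧸ (myH0 α).subgroupOf (myH1 hcomm α)) = QuotientGroup.mk 1 := by
      apply coset_eq hcomm α
      show pick hcomm α 1 • α = (1 : H) • α
      rw [← pick_spec hcomm α 1]
      simp
    simpa using e1
  map_mul' := by
    intro a b
    have e1 : (QuotientGroup.mk (⟨pick hcomm α (a * b), pick_mem hcomm α (a * b)⟩ :
        (myH1 hcomm α : Subgroup H)) :
        (myH1 hcomm α) ⧸ (myH0 α).subgroupOf (myH1 hcomm α)) =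
        QuotientGroup.mk (⟨pick hcomm α a, pick_mem hcomm α a⟩ *
          ⟨pick hcomm α b, pick_mem hcomm α b⟩) := by
      apply coset_eq hcomm α
      show pick hcomm α (a * b) • α = (pick hcomm α a * pick hcomm α b) • α
      rw [← pick_spec hcomm α (a * b)]
      show op ((a : G) * b) • α = (pick hcomm α a * pick hcomm α b) • α
      rw [show op ((a : G) * b) = op (b : G) * op (a : G) from rfl, mul_smul,
        pick_spec hcomm α a, hcomm, pick_spec hcomm α b, mul_smul]
    exact e1

lemma myhom_surjective : Function.Surjective (myhom hcomm α) := by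
  intro q
  obtain ⟨h, rfl⟩ := QuotientGroup.mk_surjective q
  obtain ⟨hmem, g, hg⟩ := h
  have hg1 : g ∈ myG1 hcomm α := ⟨hmem, hg.symm⟩
  refine ⟨⟨g, hg1⟩, ?_⟩
  apply coset_eq hcomm α
  show pick hcomm α ⟨g, hg1⟩ • α = hmem • α
  rw [← pick_spec hcomm α ⟨g, hg1⟩, ← hg]

lemma myhom_ker : (myhom hcomm α).ker = (myG0 α).subgroupOf (myG1 hcomm α) := by
  ext g
  rw [MonoidHom.mem_ker, Subgroup.mem_subgroupOf]
  have e : (myhom hcomm α) g = QuotientGroup.mk ⟨pick hcomm α g, pick_mem hcomm α g⟩ := rfl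
  rw [e, QuotientGroup.eq_one_iff, Subgroup.mem_subgroupOf]
  show pick hcomm α g • α = α ↔ op (g : G) • α = α
  rw [← pick_spec hcomm α g]

noncomputable def myiso : ((myG1 hcomm α) ⧸ (myG0 α).subgroupOf (myG1 hcomm α)) ≃*
    ((myH1 hcomm α) ⧸ (myH0 α).subgroupOf (myH1 hcomm α)) :=
  (QuotientGroup.quotientMulEquivOfEq (myhom_ker hcomm α).symm).trans
    (QuotientGroup.quotientKerEquivOfSurjective _ (myhom_surjective hcomm α))

end Aux

/-- Biset stabilizer lemma: for an `(H,G)`-biset `X` (left `H`-action and right `G`-action,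
encoded as a `Gᵐᵒᵖ`-action, commuting with each other) and a fixed `α ∈ X`, the sets
`G₀ = {g | α·g = α}`, `G₁ = {g | ∃ h, α·g = h·α}` are subgroups of `G`,
`H₀ = {h | h·α = α}`, `H₁ = {h | ∃ g, h·α = α·g}` are subgroups of `H`,
with `G₀ ⊴ G₁`, `H₀ ⊴ H₁`, and `G₁/G₀ ≅ H₁/H₀`. -/
theorem stmt3 {G H X : Type*} [Group G] [Group H] [Fintype G] [Fintype H]
    [MulAction H X] [MulAction Gᵐᵒᵖ X]
    (hcomm : ∀ (h : H) (g : Gᵐᵒᵖ) (x : X), g • (h • x) = h • (g • x))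
    (α : X) :
    ∃ (G₀ G₁ : Subgroup G) (H₀ H₁ : Subgroup H),
      (∀ g : G, g ∈ G₀ ↔ op g • α = α) ∧
      (∀ g : G, g ∈ G₁ ↔ ∃ h : H, op g • α = h • α) ∧
      (∀ h : H, h ∈ H₀ ↔ h • α = α) ∧
      (∀ h : H, h ∈ H₁ ↔ ∃ g : G, h • α = op g • α) ∧
      G₀ ≤ G₁ ∧ H₀ ≤ H₁ ∧
      (G₀.subgroupOf G₁).Normal ∧ (H₀.subgroupOf H₁).Normal ∧
      (∀ (h1 : (G₀.subgroupOf G₁).Normal) (h2 : (H₀.subgroupOf H₁).Normal),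
        Nonempty ((G₁ ⧸ G₀.subgroupOf G₁) ≃* (H₁ ⧸ H₀.subgroupOf H₁))) := by
  refine ⟨myG0 α, myG1 hcomm α, myH0 α, myH1 hcomm α,
    fun g => Iff.rfl, fun g => Iff.rfl, fun h => Iff.rfl, fun h => Iff.rfl,
    myG0_le_myG1 hcomm α, myH0_le_myH1 hcomm α,
    myG0_normal hcomm α, myH0_normal hcomm α, fun h1 h2 => ?_⟩
  exact ⟨@myiso G H X _ _ _ _ hcomm α h2 h1⟩
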